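/- CHCDS coverage upper bound. Let 𝒳 be a measurable space, α ∈ (0,1), and n ≥ 1 with 1 ≤ ⌊α(n+1)⌋ ≤ n. Let (X_1, Y_1), …, (X_{n+1}, Y_{n+1}) be exchangeable random pairs taking values in 𝒳 × ℝ, and let f̂ : ℝ × 𝒳 → ℝ and ĉ : 𝒳 → ℝ be fixed measurable functions. Define scores V_i = f̂(Y_i, X_i) − ĉ(X_i) for i = 1, …, n+1, and assume V_1, …, V_{n+1} are almost surely distinct. Let q̂ be the ⌊α(n+1)⌋-th smallest value among V_1, …, V_n, and define the prediction set Ĉ(x) = {y ∈ ℝ : f̂(y, x) > ĉ(x) + q̂}. Then P(Y_{n+1} ∈ Ĉ(X_{n+1})) ≤ 1 − α + 1/(n+1). -/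

import Mathlib

open MeasureTheory Filter Finset
open scoped ENNReal

/-- The `k`-th smallest value (1-indexed) among `v 0, …, v (n-1)`,
counted with multiplicity. -/
noncomputable def kthSmallest {n : ℕ} (v : Fin n → ℝ) (k : ℕ) : ℝ :=
  if h : k - 1 < n then v (Tuple.sort v ⟨k - 1, h⟩) else 0

lemma filter_ge_card {m k : ℕ} (hk : k < m) :
    (Finset.filter (fun x : Fin m => k ≤ (x:ℕ)) univ).card = m - k := by
  have : (Finset.filter (fun x : Fin m => k ≤ (x:ℕ)) univ) = Finset.Ici (⟨k, hk⟩ : Fin m) := by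
    ext x; simp [Fin.le_def]
  rw [this, Fin.card_Ici]

lemma filter_le_card {m : ℕ} (a : Fin m) :
    (Finset.filter (fun x : Fin m => x ≤ a) univ).card = (a:ℕ) + 1 := by
  have : (Finset.filter (fun x : Fin m => x ≤ a) univ) = Finset.Iic a := by
    ext x; simp
  rw [this, Fin.card_Iic]

lemma filter_lt_card {m : ℕ} (a : Fin m) :
    (Finset.filter (fun x : Fin m => x < a) univ).card = (a:ℕ) := by
  have : (Finset.filter (fun x : Fin m => x < a) univ) = Finset.Iio a := by
    ext x; simp
  rw [this, Fin.card_Iio]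

lemma kthSmallest_lt_iff {n : ℕ} (v : Fin n → ℝ) (k : ℕ) (hk1 : 1 ≤ k) (hkn : k ≤ n)
    (w : ℝ) :
    kthSmallest v k < w ↔ k ≤ (univ.filter (fun i => v i < w)).card := by
  have hlt : k - 1 < n := by omega
  rw [kthSmallest, dif_pos hlt]
  set σ := Tuple.sort v with hσ
  have hmono : Monotone (v ∘ σ) := Tuple.monotone_sort v
  have hcard : (univ.filter (fun i => v i < w)).card
      = (univ.filter (fun j => v (σ j) < w)).card := by
    apply Finset.card_bij' (fun a _ => σ.symm a) (fun a _ => σ a) <;> simp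
  rw [hcard]
  constructor
  · intro h
    have hsub : (univ.filter (fun j : Fin n => j ≤ ⟨k-1, hlt⟩)) ⊆
        (univ.filter (fun j => v (σ j) < w)) := by
      intro j hj
      simp only [mem_filter, mem_univ, true_and] at hj ⊢
      exact lt_of_le_of_lt (hmono hj) h
    have := card_le_card hsub
    rw [filter_le_card] at this
    have hval : ((⟨k-1,hlt⟩ : Fin n) : ℕ) = k-1 := rfl
    rw [hval] at this
    omega
  · intro h
    by_contra hc
    push_neg at hc
    have hsub : (univ.filter (fun j : Fin n => v (σ j) < w)) ⊆
        univ.filter (fun j => j < ⟨k-1, hlt⟩) := by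
      intro j hj
      simp only [mem_filter, mem_univ, true_and] at hj ⊢
      by_contra hj2
      push_neg at hj2
      exact absurd (lt_of_lt_of_le hj (le_trans hc (hmono hj2))) (lt_irrefl _)
    have := card_le_card hsub
    rw [filter_lt_card] at this
    have hval : ((⟨k-1,hlt⟩ : Fin n) : ℕ) = k-1 := rfl
    rw [hval] at this
    omega

lemma rank_lt {m : ℕ} (v : Fin m → ℝ) (j : Fin m) :
    (univ.filter (fun i => v i < v j)).card < m := by
  have hsub : (univ.filter (fun i => v i < v j)) ⊆ univ.erase j := by
    intro i hi
    simp only [mem_filter, mem_univ, true_and] at hi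
    exact Finset.mem_erase.2 ⟨fun h => absurd hi (by simp [h]), mem_univ i⟩
  calc (univ.filter (fun i => v i < v j)).card ≤ (univ.erase j).card := card_le_card hsub
    _ < univ.card := Finset.card_erase_lt_of_mem (mem_univ j)
    _ = m := by simp

lemma rank_inj {m : ℕ} (v : Fin m → ℝ) (hv : Function.Injective v) :
    Function.Injective (fun j => (univ.filter (fun i => v i < v j)).card) := by
  have key : ∀ j j' : Fin m, v j < v j' →
      (univ.filter (fun i => v i < v j)).card < (univ.filter (fun i => v i < v j')).card := by
    intro j j' h
    apply Finset.card_lt_card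
    constructor
    · intro i hi
      simp only [mem_filter, mem_univ, true_and] at hi ⊢
      exact lt_trans hi h
    · intro hsub
      have : j ∈ univ.filter (fun i => v i < v j') := by simp [h]
      have := hsub this
      simp at this
  intro j j' h
  by_contra hne
  rcases lt_or_gt_of_ne (fun he => hne (hv he)) with hlt | hlt
  · exact absurd h (Nat.ne_of_lt (key _ _ hlt))
  · exact absurd h.symm (Nat.ne_of_lt (key _ _ hlt))

lemma card_rank_ge {m k : ℕ} (hk : k < m) (v : Fin m → ℝ) (hv : Function.Injective v) :
    (univ.filter (fun j => k ≤ (univ.filter (fun i => v i < v j)).card)).card = m - k := by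
  set r : Fin m → Fin m := fun j => ⟨(univ.filter (fun i => v i < v j)).card, rank_lt v j⟩
    with hr
  have hrinj : Function.Injective r := by
    intro a b hab
    exact rank_inj v hv (congrArg Fin.val hab)
  have hrbij : Function.Bijective r := Finite.injective_iff_bijective.1 hrinj
  have : (univ.filter (fun j => k ≤ (univ.filter (fun i => v i < v j)).card)).card
      = (univ.filter (fun x : Fin m => k ≤ (x:ℕ))).card := by
    apply Finset.card_bij (fun a _ => r a)
    · intro a ha
      simp only [mem_filter, mem_univ, true_and] at ha ⊢
      exact ha
    · intro a ha b hb hab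
      exact hrinj hab
    · intro b hb
      obtain ⟨a, ha⟩ := hrbij.2 b
      refine ⟨a, ?_, ha⟩
      simp only [mem_filter, mem_univ, true_and] at hb ⊢
      rw [← ha] at hb
      exact hb
  rw [this, filter_ge_card hk]

theorem CHCDS_coverage_upper
    {𝒳 : Type*} [MeasurableSpace 𝒳] {Ω : Type*} [MeasurableSpace Ω]
    (P : Measure Ω) [IsProbabilityMeasure P]
    (α : ℝ) (hα : α ∈ Set.Ioo (0 : ℝ) 1)
    (n : ℕ) (hn : 1 ≤ n)
    (hfloor1 : 1 ≤ ⌊α * ((n : ℝ) + 1)⌋₊) (hfloorn : ⌊α * ((n : ℝ) + 1)⌋₊ ≤ n)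
    (X : Fin (n + 1) → Ω → 𝒳) (Y : Fin (n + 1) → Ω → ℝ)
    (hX : ∀ i, Measurable (X i)) (hY : ∀ i, Measurable (Y i))
    (hexch : ∀ σ : Equiv.Perm (Fin (n + 1)),
      Measure.map (fun ω => fun i => (X (σ i) ω, Y (σ i) ω)) P =
        Measure.map (fun ω => fun i => (X i ω, Y i ω)) P)
    (fhat : ℝ × 𝒳 → ℝ) (chat : 𝒳 → ℝ)
    (hfhat : Measurable fhat) (hchat : Measurable chat)
    (V : Fin (n + 1) → Ω → ℝ)
    (hV : ∀ i ω, V i ω = fhat (Y i ω, X i ω) - chat (X i ω))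
    (hdist : ∀ i j, i ≠ j → P {ω | V i ω = V j ω} = 0)
    (qhat : Ω → ℝ)
    (hqhat : ∀ ω, qhat ω =
      kthSmallest (fun i : Fin n => V i.castSucc ω) ⌊α * ((n : ℝ) + 1)⌋₊) :
    (P {ω | chat (X (Fin.last n) ω) + qhat ω <
        fhat (Y (Fin.last n) ω, X (Fin.last n) ω)}).toReal ≤
      1 - α + 1 / (n + 1) := by
  set k := ⌊α * ((n : ℝ) + 1)⌋₊ with hkdef
  -- measurability of scores
  have hVmeas : ∀ i, Measurable (V i) := by
    intro i
    have : V i = fun ω => fhat (Y i ω, X i ω) - chat (X i ω) := funext (hV i)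
    rw [this]
    exact (hfhat.comp ((hY i).prodMk (hX i))).sub (hchat.comp (hX i))
  set Vvec : Ω → (Fin (n+1) → ℝ) := fun ω i => V i ω with hVvecdef
  have hVvecMeas : Measurable Vvec := measurable_pi_lambda _ hVmeas
  -- permutation invariance of the law of the score vector
  have hperm : ∀ σ : Equiv.Perm (Fin (n+1)),
      Measure.map (fun ω (i : Fin (n+1)) => V (σ i) ω) P = Measure.map Vvec P := by
    intro σ
    set g : (𝒳 × ℝ) → ℝ := fun p => fhat (p.2, p.1) - chat p.1 with hgdef
    have hgmeas : Measurable g :=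
      (hfhat.comp (measurable_snd.prodMk measurable_fst)).sub (hchat.comp measurable_fst)
    set G : (Fin (n+1) → 𝒳 × ℝ) → (Fin (n+1) → ℝ) := fun z i => g (z i) with hGdef
    have hGmeas : Measurable G :=
      measurable_pi_lambda _ (fun i => hgmeas.comp (measurable_pi_apply i))
    have hpairMeas : Measurable (fun ω (i : Fin (n+1)) => (X i ω, Y i ω)) :=
      measurable_pi_lambda _ (fun i => (hX i).prodMk (hY i))
    have hpairMeasσ : Measurable (fun ω (i : Fin (n+1)) => (X (σ i) ω, Y (σ i) ω)) :=
      measurable_pi_lambda _ (fun i => (hX (σ i)).prodMk (hY (σ i)))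
    have h1 : (fun ω (i : Fin (n+1)) => V (σ i) ω)
        = G ∘ (fun ω i => (X (σ i) ω, Y (σ i) ω)) := by
      funext ω
      funext i
      simp [hGdef, hgdef, hV]
    have h2 : Vvec = G ∘ (fun ω i => (X i ω, Y i ω)) := by
      funext ω
      funext i
      simp [hVvecdef, hGdef, hgdef, hV]
    rw [h1, h2, ← Measure.map_map hGmeas hpairMeasσ, ← Measure.map_map hGmeas hpairMeas,
      hexch σ]
  -- the rank sets
  set A : Fin (n+1) → Set (Fin (n+1) → ℝ) :=
    fun j => {v | k ≤ (univ.filter (fun i => v i < v j)).card} with hAdef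
  have hAmeas : ∀ j, MeasurableSet (A j) := by
    intro j
    have hRm : Measurable (fun v : Fin (n+1) → ℝ => (univ.filter (fun i => v i < v j)).card) := by
      have : (fun v : Fin (n+1) → ℝ => (univ.filter (fun i => v i < v j)).card)
          = fun v => ∑ i : Fin (n+1), if v i < v j then 1 else 0 := by
        funext v
        rw [Finset.card_filter]
      rw [this]
      exact Finset.measurable_sum _ (fun i _ =>
        Measurable.ite (measurableSet_lt (measurable_pi_apply i) (measurable_pi_apply j))
          measurable_const measurable_const)
    exact hRm ((Set.to_countable _).measurableSet)
  -- all the events have the same probability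
  have hBeq : ∀ j, P (Vvec ⁻¹' A j) = P (Vvec ⁻¹' A (Fin.last n)) := by
    intro j
    set σ := Equiv.swap j (Fin.last n) with hσdef
    have hm : Measurable (fun ω (i : Fin (n+1)) => V (σ i) ω) :=
      measurable_pi_lambda _ (fun i => hVmeas _)
    have h1 : Measure.map (fun ω (i : Fin (n+1)) => V (σ i) ω) P (A (Fin.last n))
        = Measure.map Vvec P (A (Fin.last n)) := by rw [hperm σ]
    rw [Measure.map_apply hVvecMeas (hAmeas _), Measure.map_apply hm (hAmeas _)] at h1
    have hset : (fun ω (i : Fin (n+1)) => V (σ i) ω) ⁻¹' A (Fin.last n) = Vvec ⁻¹' A j := by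
      ext ω
      simp only [Set.mem_preimage, hAdef, Set.mem_setOf_eq]
      have hcardeq : (univ.filter (fun i => V (σ i) ω < V (σ (Fin.last n)) ω)).card
          = (univ.filter (fun i => Vvec ω i < Vvec ω (σ (Fin.last n)))).card := by
        apply Finset.card_bij' (fun a _ => σ a) (fun a _ => σ.symm a) <;> simp [hVvecdef]
      rw [hcardeq]
      have : σ (Fin.last n) = j := Equiv.swap_apply_right j (Fin.last n)
      rw [this]
    rw [hset] at h1
    exact h1
  -- almost surely, the scores are injective
  set D : Set Ω := {ω | Function.Injective (fun i => V i ω)} with hDdef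
  have hDc : P Dᶜ = 0 := by
    have hsub : Dᶜ ⊆ ⋃ (i : Fin (n+1)) (j : Fin (n+1)) (_ : i ≠ j), {ω | V i ω = V j ω} := by
      intro ω hω
      simp only [hDdef, Set.mem_compl_iff, Set.mem_setOf_eq, Function.Injective] at hω
      push_neg at hω
      obtain ⟨i, j, hij, hne⟩ := hω
      exact Set.mem_iUnion.2 ⟨i, Set.mem_iUnion.2 ⟨j, Set.mem_iUnion.2 ⟨hne, hij⟩⟩⟩
    refine measure_mono_null hsub ?_
    refine measure_iUnion_null fun i => measure_iUnion_null fun j => ?_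
    by_cases h : i = j
    · simp [h]
    · simpa [h] using hdist i j h
  -- sum of the probabilities
  have hsum : ∑ j : Fin (n+1), P (Vvec ⁻¹' A j) = ((n + 1 - k : ℕ) : ℝ≥0∞) := by
    have hind : ∀ j : Fin (n+1), P (Vvec ⁻¹' A j)
        = ∫⁻ ω, Set.indicator (Vvec ⁻¹' A j) (fun _ => (1 : ℝ≥0∞)) ω ∂P := by
      intro j
      exact (lintegral_indicator_one (hVvecMeas (hAmeas j))).symm
    calc ∑ j : Fin (n+1), P (Vvec ⁻¹' A j)
        = ∑ j : Fin (n+1), ∫⁻ ω, Set.indicator (Vvec ⁻¹' A j) (fun _ => (1:ℝ≥0∞)) ω ∂P := by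
          exact Finset.sum_congr rfl fun j _ => hind j
      _ = ∫⁻ ω, ∑ j : Fin (n+1), Set.indicator (Vvec ⁻¹' A j) (fun _ => (1:ℝ≥0∞)) ω ∂P := by
          rw [lintegral_finset_sum]
          intro j _
          exact (measurable_const.indicator (hVvecMeas (hAmeas j)))
      _ = ∫⁻ _, ((n + 1 - k : ℕ) : ℝ≥0∞) ∂P := by
          apply lintegral_congr_ae
          have hD1 : ∀ᵐ ω ∂P, ω ∈ D := by
            rw [MeasureTheory.ae_iff]
            exact hDc
          filter_upwards [hD1] with ω hω
          have hinj : Function.Injective (Vvec ω) := hω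
          have hcard := card_rank_ge (m := n+1) (k := k) (by omega) (Vvec ω) hinj
          have : ∑ j : Fin (n+1), Set.indicator (Vvec ⁻¹' A j) (fun _ => (1:ℝ≥0∞)) ω
              = ((univ.filter (fun j : Fin (n+1) =>
                  k ≤ (univ.filter (fun i => Vvec ω i < Vvec ω j)).card)).card : ℝ≥0∞) := by
            rw [Finset.card_filter]
            push_cast
            apply Finset.sum_congr rfl
            intro j _
            by_cases h : ω ∈ Vvec ⁻¹' A j
            · have h' : k ≤ (univ.filter (fun i => Vvec ω i < Vvec ω j)).card := h
              simp [Set.indicator_of_mem h, h']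
            · have h' : ¬ k ≤ (univ.filter (fun i => Vvec ω i < Vvec ω j)).card := h
              simp [Set.indicator_of_notMem h, h']
          rw [this, hcard]
      _ = ((n + 1 - k : ℕ) : ℝ≥0∞) := by
          rw [lintegral_const, measure_univ, mul_one]
  -- deduce the value of the last probability
  have hne : ∀ j, P (Vvec ⁻¹' A j) ≠ ⊤ := fun j => measure_ne_top _ _
  have hsum2 : ((n+1 : ℕ) : ℝ) * (P (Vvec ⁻¹' A (Fin.last n))).toReal = ((n + 1 - k : ℕ) : ℝ) := by
    have h1 : (∑ j : Fin (n+1), P (Vvec ⁻¹' A j)).toReal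
        = ∑ j : Fin (n+1), (P (Vvec ⁻¹' A j)).toReal :=
      ENNReal.toReal_sum (fun j _ => hne j)
    rw [hsum] at h1
    rw [ENNReal.toReal_natCast] at h1
    have h2 : ∑ j : Fin (n+1), (P (Vvec ⁻¹' A j)).toReal
        = ((n+1 : ℕ) : ℝ) * (P (Vvec ⁻¹' A (Fin.last n))).toReal := by
      rw [Finset.sum_congr rfl (fun j _ => by rw [hBeq j])]
      simp [Finset.sum_const, Finset.card_univ]
    rw [h2] at h1
    exact h1.symm
  -- identify the target event with the last rank event
  have hEvent : {ω | chat (X (Fin.last n) ω) + qhat ω <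
      fhat (Y (Fin.last n) ω, X (Fin.last n) ω)} = Vvec ⁻¹' A (Fin.last n) := by
    ext ω
    simp only [Set.mem_setOf_eq, Set.mem_preimage, hAdef, hVvecdef]
    have hq : qhat ω = kthSmallest (fun i : Fin n => V i.castSucc ω) k := hqhat ω
    have hVlast : V (Fin.last n) ω
        = fhat (Y (Fin.last n) ω, X (Fin.last n) ω) - chat (X (Fin.last n) ω) := hV _ ω
    have step1 : (chat (X (Fin.last n) ω) + qhat ω <
        fhat (Y (Fin.last n) ω, X (Fin.last n) ω)) ↔ qhat ω < V (Fin.last n) ω := by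
      rw [hVlast]
      constructor <;> intro h <;> linarith
    rw [step1, hq,
      kthSmallest_lt_iff (fun i : Fin n => V i.castSucc ω) k hfloor1 hfloorn (V (Fin.last n) ω)]
    have hsplit : (univ.filter (fun i : Fin (n+1) => V i ω < V (Fin.last n) ω)).card
        = (univ.filter (fun i : Fin n => V i.castSucc ω < V (Fin.last n) ω)).card := by
      rw [Finset.card_filter, Finset.card_filter, Fin.sum_univ_castSucc]
      simp
    rw [← hsplit]
  rw [hEvent]
  -- arithmetic conclusion
  set t := (P (Vvec ⁻¹' A (Fin.last n))).toReal with htdef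
  have hnk : ((n + 1 - k : ℕ) : ℝ) = (n : ℝ) + 1 - (k : ℝ) := by
    have : k ≤ n + 1 := by omega
    push_cast [Nat.cast_sub this]
    ring
  have hnpos : (0:ℝ) < (n : ℝ) + 1 := by positivity
  have hkα : α * ((n : ℝ) + 1) < (k : ℝ) + 1 := by
    rw [hkdef]
    exact Nat.lt_floor_add_one _
  have ht : t = ((n : ℝ) + 1 - (k : ℝ)) / ((n : ℝ) + 1) := by
    rw [hnk] at hsum2
    field_simp
    push_cast at hsum2 ⊢
    linarith
  rw [ht]
  rw [div_le_iff₀ hnpos]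
  have hexp : (1 - α + 1 / ((n:ℝ) + 1)) * ((n:ℝ) + 1)
      = (1 - α) * ((n:ℝ)+1) + 1 := by
    field_simp
  rw [hexp]
  nlinarith
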